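/- Let s, t ≥ 2 be coprime integers, set c := st − s − t, and define χ : ℤ → {−1,0,1} by χ(n) = 1 if n ≡ st + (s+t) or n ≡ st − (s+t) modulo 2st, χ(n) = −1 if n ≡ st + (s−t) or n ≡ st − (s−t) modulo 2st, and χ(n) = 0 otherwise. Then: (i) for every natural number n with χ(n) ≠ 0, both (n² − c²)/(4st) and (n − c)/2 are nonnegative integers, and (s−1)(t−1)/2 is a nonnegative integer; (ii) for all complex numbers q, x with 0 < |q| < 1, x ≠ 1 and x q² ≠ 1, the series F(x) := ( (q x)^{(s−1)(t−1)/2} / (1 − x) ) · Σ_{n ≥ 0} χ(n) q^{(n² − c²)/(4st)} x^{(n−c)/2} converges absolutely and satisfies the functional equation F(x) = ( (q x)^{(s−1)(t−1)/2} / (1 − x) ) · ( 1 − q^{s−1} x^{s} − q^{t−1} x^{t} + q^{s+t} x^{s+t} ) + ( (1 − x q²)/(1 − x) ) · q^{st−1} x^{st} · F(x q²). -/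

import Mathlib

/-- `χ_{s,t}(n)`: equals `1` if `n ≡ st ± (s+t) (mod 2st)`, `−1` if `n ≡ st ± (s−t) (mod 2st)`,
and `0` otherwise.  (Here `st − (s+t)`, `st + (s−t) = st + s − t` and
`st − (s−t) = st + t − s` are written with natural subtraction, which agrees with the
integer value since `s, t ≥ 2`.) -/
def chi (s t n : ℕ) : ℤ :=
  if n % (2 * s * t) = (s * t + s + t) % (2 * s * t) ∨
      n % (2 * s * t) = (s * t - s - t) % (2 * s * t) then 1
  else if n % (2 * s * t) = (s * t + s - t) % (2 * s * t) ∨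
      n % (2 * s * t) = (s * t + t - s) % (2 * s * t) then -1
  else 0

/-- The `n`-th term `χ_{s,t}(n) q^{(n²−c²)/(4st)} x^{(n−c)/2}` with `c = st − s − t`;
the natural-number subtractions and divisions agree with the true exponents whenever
`χ_{s,t}(n) ≠ 0`, and otherwise the term vanishes. -/
noncomputable def torusTerm (s t : ℕ) (q x : ℂ) (n : ℕ) : ℂ :=
  (chi s t n : ℂ) * q ^ ((n ^ 2 - (s * t - s - t) ^ 2) / (4 * s * t)) *
    x ^ ((n - (s * t - s - t)) / 2)

/-- `F(x) = ((qx)^{(s−1)(t−1)/2} / (1−x)) Σ_{n ≥ 0} χ_{s,t}(n) q^{(n²−c²)/(4st)} x^{(n−c)/2}`. -/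
noncomputable def torusF (s t : ℕ) (q x : ℂ) : ℂ :=
  ((q * x) ^ ((s - 1) * (t - 1) / 2) / (1 - x)) * ∑' n : ℕ, torusTerm s t q x n

section Aux
variable (s t : ℕ)

lemma st_big (hs : 2 ≤ s) (ht : 2 ≤ t) (hco : Nat.Coprime s t) : s + t + 1 ≤ s * t := by
  have hne : s ≠ t := by
    rintro rfl
    have : s = 1 := by rwa [Nat.Coprime, Nat.gcd_self] at hco
    omega
  have h3 : 3 ≤ s ∨ 3 ≤ t := by omega
  rcases h3 with h3 | h3 <;> nlinarith

lemma chi_period (n : ℕ) : chi s t (n + 2 * s * t) = chi s t n := by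
  unfold chi
  rw [Nat.add_mod_right]

lemma chi_eval (h : s + t + 1 ≤ s * t) (n : ℕ) :
    chi s t n =
      if n % (2 * s * t) = s * t + s + t ∨ n % (2 * s * t) = s * t - s - t then 1
      else if n % (2 * s * t) = s * t + s - t ∨ n % (2 * s * t) = s * t + t - s then -1
      else 0 := by
  have hm : 2 * s * t = 2 * (s * t) := by ring
  unfold chi
  rw [Nat.mod_eq_of_lt (show s * t + s + t < 2 * s * t by omega),
    Nat.mod_eq_of_lt (show s * t - s - t < 2 * s * t by omega),
    Nat.mod_eq_of_lt (show s * t + s - t < 2 * s * t by omega),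
    Nat.mod_eq_of_lt (show s * t + t - s < 2 * s * t by omega)]

lemma chi_cases (h : s + t + 1 ≤ s * t) (n : ℕ) :
    (chi s t n = 1 ∧ (n % (2 * s * t) = s * t + s + t ∨ n % (2 * s * t) = s * t - s - t)) ∨
    (chi s t n = -1 ∧ (n % (2 * s * t) = s * t + s - t ∨ n % (2 * s * t) = s * t + t - s)) ∨
    chi s t n = 0 := by
  rw [chi_eval s t h]
  split_ifs with h1 h2 <;> tauto

lemma exps (hs : 2 ≤ s) (ht : 2 ≤ t) (h : s + t + 1 ≤ s * t) (n : ℕ) (hn : chi s t n ≠ 0) :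
    ∃ A B : ℕ, s * t - s - t ≤ n ∧ n ^ 2 - (s * t - s - t) ^ 2 = 4 * s * t * A ∧
      n - (s * t - s - t) = 2 * B := by
  have hm : 2 * s * t = 2 * (s * t) := by ring
  obtain ⟨k, hk⟩ : ∃ k, 2 * s * t * k + n % (2 * s * t) = n :=
    ⟨n / (2 * s * t), Nat.div_add_mod n (2 * s * t)⟩
  rcases chi_cases s t h n with ⟨_, hr | hr⟩ | ⟨_, hr | hr⟩ | h0
  · rw [hr] at hk
    have hnz : (n : ℤ) = 2 * s * t * k + (s * t + s + t) := by zify at hk; linarith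
    have hle : s * t - s - t ≤ n := by omega
    refine ⟨s * t * k ^ 2 + (s * t + s + t) * k + (s + t), s * t * k + (s + t), hle, ?_, ?_⟩
    · zify [show t ≤ s * t - s by omega, show s ≤ s * t by omega, Nat.pow_le_pow_left hle 2]
      rw [hnz]; ring
    · zify [show t ≤ s * t - s by omega, show s ≤ s * t by omega, hle]
      rw [hnz]; ring
  · rw [hr] at hk
    have hnz : (n : ℤ) = 2 * s * t * k + (s * t - s - t) := by
      zify [show t ≤ s * t - s by omega, show s ≤ s * t by omega] at hk; linarith
    have hle : s * t - s - t ≤ n := by omega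
    refine ⟨s * t * k ^ 2 + (s * t - s - t) * k, s * t * k, hle, ?_, ?_⟩
    · zify [show t ≤ s * t - s by omega, show s ≤ s * t by omega, Nat.pow_le_pow_left hle 2]
      rw [hnz]; ring
    · zify [show t ≤ s * t - s by omega, show s ≤ s * t by omega, hle]
      rw [hnz]; ring
  · rw [hr] at hk
    have hnz : (n : ℤ) = 2 * s * t * k + (s * t + s - t) := by
      zify [show t ≤ s * t + s by omega] at hk; linarith
    have hle : s * t - s - t ≤ n := by omega
    refine ⟨s * t * k ^ 2 + (s * t + s - t) * k + (s - 1), s * t * k + s, hle, ?_, ?_⟩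
    · zify [show t ≤ s * t - s by omega, show s ≤ s * t by omega, show t ≤ s * t + s by omega,
        show 1 ≤ s by omega, Nat.pow_le_pow_left hle 2]
      rw [hnz]; ring
    · zify [show t ≤ s * t - s by omega, show s ≤ s * t by omega, show t ≤ s * t + s by omega,
        hle]
      rw [hnz]; ring
  · rw [hr] at hk
    have hnz : (n : ℤ) = 2 * s * t * k + (s * t + t - s) := by
      zify [show s ≤ s * t + t by omega] at hk; linarith
    have hle : s * t - s - t ≤ n := by omega
    refine ⟨s * t * k ^ 2 + (s * t + t - s) * k + (t - 1), s * t * k + t, hle, ?_, ?_⟩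
    · zify [show t ≤ s * t - s by omega, show s ≤ s * t by omega, show s ≤ s * t + t by omega,
        show 1 ≤ t by omega, Nat.pow_le_pow_left hle 2]
      rw [hnz]; ring
    · zify [show t ≤ s * t - s by omega, show s ≤ s * t by omega, show s ≤ s * t + t by omega,
        hle]
      rw [hnz]; ring
  · exact absurd h0 hn

end Aux

section Aux2
variable (s t : ℕ)

lemma chi_r1 (h : s + t + 1 ≤ s * t) : chi s t (s * t + s + t) = 1 := by
  have hm : 2 * s * t = 2 * (s * t) := by ring
  rw [chi_eval s t h, Nat.mod_eq_of_lt (by omega), if_pos (Or.inl rfl)]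

lemma chi_r2 (h : s + t + 1 ≤ s * t) : chi s t (s * t - s - t) = 1 := by
  have hm : 2 * s * t = 2 * (s * t) := by ring
  rw [chi_eval s t h, Nat.mod_eq_of_lt (by omega), if_pos (Or.inr rfl)]

lemma chi_r3 (hs : 2 ≤ s) (ht : 2 ≤ t) (h : s + t + 1 ≤ s * t) :
    chi s t (s * t + s - t) = -1 := by
  have hm : 2 * s * t = 2 * (s * t) := by ring
  rw [chi_eval s t h, Nat.mod_eq_of_lt (by omega), if_neg (by omega), if_pos (Or.inl rfl)]

lemma chi_r4 (hs : 2 ≤ s) (ht : 2 ≤ t) (h : s + t + 1 ≤ s * t) :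
    chi s t (s * t + t - s) = -1 := by
  have hm : 2 * s * t = 2 * (s * t) := by ring
  rw [chi_eval s t h, Nat.mod_eq_of_lt (by omega), if_neg (by omega), if_pos (Or.inr rfl)]

lemma chi_zero (h : s + t + 1 ≤ s * t) (n : ℕ) (hn : n < 2 * s * t)
    (h1 : n ≠ s * t + s + t) (h2 : n ≠ s * t - s - t) (h3 : n ≠ s * t + s - t)
    (h4 : n ≠ s * t + t - s) : chi s t n = 0 := by
  rw [chi_eval s t h, Nat.mod_eq_of_lt hn, if_neg (by tauto), if_neg (by tauto)]

lemma sum_range_eval (hs : 2 ≤ s) (ht : 2 ≤ t) (hst : s ≠ t) (h : s + t + 1 ≤ s * t)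
    (q x : ℂ) :
    ∑ n ∈ Finset.range (2 * s * t), torusTerm s t q x n =
      1 - q ^ (s - 1) * x ^ s - q ^ (t - 1) * x ^ t + q ^ (s + t) * x ^ (s + t) := by
  have hm : 2 * s * t = 2 * (s * t) := by ring
  have h4st : 0 < 4 * s * t := by positivity
  classical
  have hsub : ({s * t - s - t, s * t + s - t, s * t + t - s, s * t + s + t} : Finset ℕ)
      ⊆ Finset.range (2 * s * t) := by
    intro n hn
    simp only [Finset.mem_insert, Finset.mem_singleton] at hn
    rw [Finset.mem_range]
    omega
  rw [← Finset.sum_subset hsub (by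
    intro n hn hnot
    simp only [Finset.mem_insert, Finset.mem_singleton] at hnot
    push_neg at hnot
    rw [Finset.mem_range] at hn
    simp [torusTerm, chi_zero s t h n hn hnot.2.2.2 hnot.1 hnot.2.1 hnot.2.2.1])]
  rw [show ({s * t - s - t, s * t + s - t, s * t + t - s, s * t + s + t} : Finset ℕ)
      = insert (s * t - s - t) (insert (s * t + s - t)
        (insert (s * t + t - s) ({s * t + s + t} : Finset ℕ))) from rfl]
  rw [Finset.sum_insert (by simp only [Finset.mem_insert, Finset.mem_singleton]; omega),
    Finset.sum_insert (by simp only [Finset.mem_insert, Finset.mem_singleton]; omega),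
    Finset.sum_insert (by simp only [Finset.mem_singleton]; omega),
    Finset.sum_singleton]
  have e2 : torusTerm s t q x (s * t - s - t) = 1 := by
    unfold torusTerm
    rw [chi_r2 s t h, Nat.sub_self, Nat.sub_self]
    simp
  have e3 : torusTerm s t q x (s * t + s - t) = -(q ^ (s - 1) * x ^ s) := by
    unfold torusTerm
    rw [chi_r3 s t hs ht h]
    have hq : (s * t + s - t) ^ 2 - (s * t - s - t) ^ 2 = 4 * s * t * (s - 1) := by
      have h1 : s * t - s - t ≤ s * t + s - t := by omega
      zify [show t ≤ s * t + s by omega, show t ≤ s * t - s by omega,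
        show s ≤ s * t by omega, show 1 ≤ s by omega, Nat.pow_le_pow_left h1 2]
      ring
    have hx : (s * t + s - t) - (s * t - s - t) = 2 * s := by omega
    rw [hq, hx, Nat.mul_div_cancel_left _ h4st, Nat.mul_div_cancel_left _ (by norm_num : 0 < 2)]
    push_cast
    ring
  have e4 : torusTerm s t q x (s * t + t - s) = -(q ^ (t - 1) * x ^ t) := by
    unfold torusTerm
    rw [chi_r4 s t hs ht h]
    have hq : (s * t + t - s) ^ 2 - (s * t - s - t) ^ 2 = 4 * s * t * (t - 1) := by
      have h1 : s * t - s - t ≤ s * t + t - s := by omega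
      zify [show s ≤ s * t + t by omega, show t ≤ s * t - s by omega,
        show s ≤ s * t by omega, show 1 ≤ t by omega, Nat.pow_le_pow_left h1 2]
      ring
    have hx : (s * t + t - s) - (s * t - s - t) = 2 * t := by omega
    rw [hq, hx, Nat.mul_div_cancel_left _ h4st, Nat.mul_div_cancel_left _ (by norm_num : 0 < 2)]
    push_cast
    ring
  have e1 : torusTerm s t q x (s * t + s + t) = q ^ (s + t) * x ^ (s + t) := by
    unfold torusTerm
    rw [chi_r1 s t h]
    have hq : (s * t + s + t) ^ 2 - (s * t - s - t) ^ 2 = 4 * s * t * (s + t) := by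
      have h1 : s * t - s - t ≤ s * t + s + t := by omega
      zify [show t ≤ s * t - s by omega, show s ≤ s * t by omega, Nat.pow_le_pow_left h1 2]
      ring
    have hx : (s * t + s + t) - (s * t - s - t) = 2 * (s + t) := by omega
    rw [hq, hx, Nat.mul_div_cancel_left _ h4st, Nat.mul_div_cancel_left _ (by norm_num : 0 < 2)]
    push_cast
    ring
  rw [e1, e2, e3, e4]
  ring

end Aux2

section Aux3
variable (s t : ℕ)

lemma shift_term (hs : 2 ≤ s) (ht : 2 ≤ t) (h : s + t + 1 ≤ s * t) (d : ℕ)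
    (hd : (s - 1) * (t - 1) = 2 * d) (q x : ℂ) (n : ℕ) :
    torusTerm s t q x (n + 2 * s * t) =
      q ^ (s * t - 1) * x ^ (s * t) * q ^ (2 * d) * torusTerm s t q (x * q ^ 2) n := by
  have hm : 2 * s * t = 2 * (s * t) := by ring
  have h4st : 0 < 4 * s * t := by positivity
  by_cases hn : chi s t n = 0
  · simp [torusTerm, chi_period, hn]
  · obtain ⟨A, B, hcn, hA, hB⟩ := exps s t hs ht h n hn
    have hd' : s * t - s - t + 1 = 2 * d := by
      rw [← hd]
      zify [show 1 ≤ s by omega, show 1 ≤ t by omega, show t ≤ s * t - s by omega,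
        show s ≤ s * t by omega]
      ring
    unfold torusTerm
    rw [chi_period]
    have hAz : (n : ℤ) ^ 2 - ((s : ℤ) * t - s - t) ^ 2 = 4 * s * t * A := by
      zify [Nat.pow_le_pow_left hcn 2, show t ≤ s * t - s by omega,
        show s ≤ s * t by omega] at hA
      linarith
    have hq2 : ((n + 2 * s * t) ^ 2 - (s * t - s - t) ^ 2) = 4 * s * t * (A + n + s * t) := by
      have hle2 : s * t - s - t ≤ n + 2 * s * t := by omega
      zify [Nat.pow_le_pow_left hle2 2, show t ≤ s * t - s by omega,
        show s ≤ s * t by omega]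
      linear_combination hAz
    have hx2 : (n + 2 * s * t - (s * t - s - t)) / 2 = B + s * t := by omega
    have hq1 : (n ^ 2 - (s * t - s - t) ^ 2) / (4 * s * t) = A := by
      rw [hA, Nat.mul_div_cancel_left _ h4st]
    have hx1 : (n - (s * t - s - t)) / 2 = B := by omega
    rw [hq2, Nat.mul_div_cancel_left _ h4st, hx2, hq1, hx1]
    have hexp : A + n + s * t = s * t - 1 + 2 * d + (A + 2 * B) := by omega
    rw [hexp]
    ring

lemma abs_chi_le (n : ℕ) : ‖(chi s t n : ℂ)‖ ≤ 1 := by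
  unfold chi
  split_ifs <;> simp

lemma summable_norm_torusTerm (hs : 2 ≤ s) (ht : 2 ≤ t) (h : s + t + 1 ≤ s * t)
    (q x : ℂ) (hq0 : 0 < ‖q‖) (hq1 : ‖q‖ < 1) :
    Summable fun n : ℕ => ‖torusTerm s t q x n‖ := by
  have hm : 2 * s * t = 2 * (s * t) := by ring
  have h4st : 0 < 4 * s * t := by positivity
  set M : ℝ := max ‖x‖ 1 with hM
  have hM1 : (1 : ℝ) ≤ M := le_max_right _ _
  have hxM : ‖x‖ ≤ M := le_max_left _ _
  have hM0 : (0 : ℝ) < M := lt_of_lt_of_le one_pos hM1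
  obtain ⟨K, hK⟩ : ∃ K : ℕ, ‖q‖ ^ K < 1 / (2 * M) :=
    exists_pow_lt_of_lt_one (by positivity) hq1
  have hKM : ‖q‖ ^ K * M < 1 / 2 := by
    have h2 : 1 / (2 * M) * M = 1 / 2 := by field_simp
    have h3 := mul_lt_mul_of_pos_right hK hM0
    linarith
  set N : ℕ := 4 * s * t * K + 4 * s * t + s * t with hN
  have key : ∀ n : ℕ, N ≤ n → ‖torusTerm s t q x n‖ ≤ (1 / 2 : ℝ) ^ n := by
    intro n hn
    have hKn : K * n ≤ (n ^ 2 - (s * t - s - t) ^ 2) / (4 * s * t) := by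
      rw [Nat.le_div_iff_mul_le h4st]
      have h1 : (s * t - s - t) ^ 2 ≤ s * t * n := by
        calc (s * t - s - t) ^ 2 ≤ (s * t) ^ 2 := Nat.pow_le_pow_left (by omega) 2
        _ = s * t * (s * t) := by ring
        _ ≤ s * t * n := Nat.mul_le_mul_left _ (by omega)
      have h2 : K * n * (4 * s * t) + s * t * n ≤ n * n := by
        calc K * n * (4 * s * t) + s * t * n = (4 * s * t * K + s * t) * n := by ring
        _ ≤ N * n := Nat.mul_le_mul_right _ (by omega)
        _ ≤ n * n := Nat.mul_le_mul_right _ hn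
      have hn2 : n ^ 2 = n * n := sq n
      omega
    have hf : (n - (s * t - s - t)) / 2 ≤ n := le_trans (Nat.div_le_self _ _)
      (Nat.sub_le _ _)
    have hb1 : ‖torusTerm s t q x n‖ ≤
        ‖q‖ ^ ((n ^ 2 - (s * t - s - t) ^ 2) / (4 * s * t)) *
          ‖x‖ ^ ((n - (s * t - s - t)) / 2) := by
      unfold torusTerm
      rw [norm_mul, norm_mul, norm_pow, norm_pow]
      have hc := abs_chi_le s t n
      have ha : (0:ℝ) ≤ ‖q‖ ^ ((n ^ 2 - (s * t - s - t) ^ 2) / (4 * s * t)) :=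
        pow_nonneg (norm_nonneg q) _
      have hbb : (0:ℝ) ≤ ‖x‖ ^ ((n - (s * t - s - t)) / 2) :=
        pow_nonneg (norm_nonneg x) _
      nlinarith [mul_nonneg (mul_nonneg (sub_nonneg.mpr hc) ha) hbb]
    calc ‖torusTerm s t q x n‖ ≤ _ := hb1
    _ ≤ ‖q‖ ^ (K * n) * M ^ n := by
      apply mul_le_mul
      · exact pow_le_pow_of_le_one (norm_nonneg q) (le_of_lt hq1) hKn
      · exact le_trans (pow_le_pow_left₀ (norm_nonneg x) hxM _)
          (pow_le_pow_right₀ hM1 hf)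
      · positivity
      · positivity
    _ = (‖q‖ ^ K * M) ^ n * (M ^ n / M ^ n) := by
      rw [div_self (by positivity), mul_one, mul_pow, pow_mul]
    _ ≤ (1 / 2 : ℝ) ^ n := by
      rw [div_self (by positivity : (M : ℝ) ^ n ≠ 0), mul_one]
      exact pow_le_pow_left₀ (by positivity) (le_of_lt hKM) n
  have hgeo : Summable fun n : ℕ => (1 / 2 : ℝ) ^ n := summable_geometric_two
  rw [← summable_nat_add_iff N]
  apply Summable.of_nonneg_of_le (fun n => norm_nonneg _)
    (fun n => key (n + N) (by omega))
  exact (summable_nat_add_iff N).mpr hgeo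

end Aux3

theorem stmt13 (s t : ℕ) (hs : 2 ≤ s) (ht : 2 ≤ t) (hco : Nat.Coprime s t) :
    (∀ n : ℕ, chi s t n ≠ 0 →
      (∃ A : ℕ, (n : ℤ) ^ 2 - ((s : ℤ) * t - s - t) ^ 2 = 4 * s * t * A) ∧
      (∃ B : ℕ, (n : ℤ) - ((s : ℤ) * t - s - t) = 2 * B)) ∧
    (∃ D : ℕ, ((s : ℤ) - 1) * ((t : ℤ) - 1) = 2 * D) ∧
    (∀ q x : ℂ, 0 < ‖q‖ → ‖q‖ < 1 → x ≠ 1 → x * q ^ 2 ≠ 1 →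
      Summable (fun n : ℕ => ‖torusTerm s t q x n‖) ∧
      torusF s t q x =
        ((q * x) ^ ((s - 1) * (t - 1) / 2) / (1 - x)) *
            (1 - q ^ (s - 1) * x ^ s - q ^ (t - 1) * x ^ t + q ^ (s + t) * x ^ (s + t)) +
          ((1 - x * q ^ 2) / (1 - x)) * q ^ (s * t - 1) * x ^ (s * t) *
            torusF s t q (x * q ^ 2)) := by
  have h := st_big s t hs ht hco
  have hm : 2 * s * t = 2 * (s * t) := by ring
  have hst : s ≠ t := by
    rintro rfl
    have : s = 1 := by rwa [Nat.Coprime, Nat.gcd_self] at hco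
    omega
  have hpar : s % 2 = 1 ∨ t % 2 = 1 := by
    by_contra hcon
    push_neg at hcon
    have h2s : 2 ∣ s := by omega
    have h2t : 2 ∣ t := by omega
    have hg := Nat.dvd_gcd h2s h2t
    have hco' : Nat.gcd s t = 1 := hco
    rw [hco'] at hg
    omega
  obtain ⟨d, hd⟩ : ∃ d, (s - 1) * (t - 1) = 2 * d := by
    rcases hpar with hp | hp
    · have h1 : s - 1 = 2 * ((s - 1) / 2) := by omega
      refine ⟨(s - 1) / 2 * (t - 1), ?_⟩
      conv_lhs => rw [h1]
      ring
    · have h1 : t - 1 = 2 * ((t - 1) / 2) := by omega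
      refine ⟨(s - 1) * ((t - 1) / 2), ?_⟩
      conv_lhs => rw [h1]
      ring
  refine ⟨?_, ⟨d, ?_⟩, ?_⟩
  · intro n hn
    obtain ⟨A, B, hcn, hA, hB⟩ := exps s t hs ht h n hn
    constructor
    · refine ⟨A, ?_⟩
      zify [Nat.pow_le_pow_left hcn 2, show t ≤ s * t - s by omega,
        show s ≤ s * t by omega] at hA
      linarith
    · refine ⟨B, ?_⟩
      zify [hcn, show t ≤ s * t - s by omega, show s ≤ s * t by omega] at hB
      linarith
  · zify [show 1 ≤ s by omega, show 1 ≤ t by omega] at hd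
    linarith
  · intro q x hq0 hq1 hx1 hxq1
    have hsum := summable_norm_torusTerm s t hs ht h q x hq0 hq1
    refine ⟨hsum, ?_⟩
    have hS : Summable (torusTerm s t q x) := hsum.of_norm
    have hD : (s - 1) * (t - 1) / 2 = d := by rw [hd]; omega
    have hshift : ∑' i : ℕ, torusTerm s t q x (i + 2 * s * t) =
        q ^ (s * t - 1) * x ^ (s * t) * q ^ (2 * d) *
          ∑' n : ℕ, torusTerm s t q (x * q ^ 2) n := by
      calc ∑' i : ℕ, torusTerm s t q x (i + 2 * s * t)
          = ∑' i : ℕ, q ^ (s * t - 1) * x ^ (s * t) * q ^ (2 * d) *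
              torusTerm s t q (x * q ^ 2) i :=
            tsum_congr fun n => shift_term s t hs ht h d hd q x n
        _ = _ := tsum_mul_left
    have hx0 : (1 : ℂ) - x ≠ 0 := sub_ne_zero.mpr (Ne.symm hx1)
    have hxq0 : (1 : ℂ) - x * q ^ 2 ≠ 0 := sub_ne_zero.mpr (Ne.symm hxq1)
    unfold torusF
    rw [hD, ← Summable.sum_add_tsum_nat_add (2 * s * t) hS, sum_range_eval s t hs ht hst h q x, hshift]
    have hpow : (q * (x * q ^ 2)) ^ d = (q * x) ^ d * q ^ (2 * d) := by
      rw [show q * (x * q ^ 2) = q * x * q ^ 2 by ring, mul_pow, ← pow_mul, mul_comm 2 d]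
    rw [hpow]
    have hxq0' : (1 : ℂ) - q ^ 2 * x ≠ 0 := by rwa [mul_comm] at hxq0
    field_simp
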